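/- Let C ⊂ V be a proper closed convex full-dimensional cone, s > 1, and f ∈ HConc_s(C) continuously differentiable on C°, with D(v) = Df(v)/s. Let C_T ⊂ C° be a nonempty subcone. If f satisfies Teissier proportionality on C_T (equality D(v)·x = f(v)^{(s-1)/s} f(x)^{1/s} for v, x ∈ C_T implies v, x proportional), then the restriction of D to C_T is injective. -/

import Mathlib

open Set Topology

variable {V : Type*} [NormedAddCommGroup V] [NormedSpace ℝ V] [FiniteDimensional ℝ V]

/-- The dual cone of `C` inside the continuous dual of `V`. -/
def dualCone (C : Set V) : Set (V →L[ℝ] ℝ) := {w | ∀ v ∈ C, 0 ≤ w v}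

/-- The polar transform of a weight-`s` homogeneous function `f` on the cone `C`. -/
noncomputable def polar (C : Set V) (s : ℝ) (f : V → ℝ) (w : V →L[ℝ] ℝ) : ℝ :=
  sInf ((fun v => (w v / f v ^ (1/s)) ^ (s/(s-1))) '' interior C)


private lemma euler_aux {V : Type*} [NormedAddCommGroup V] [NormedSpace ℝ V]
    (C : Set V) (s : ℝ) (f : V → ℝ)
    (hfhom : ∀ t : ℝ, 0 ≤ t → ∀ v ∈ C, f (t • v) = t ^ s * f v)
    (hfC1 : ContDiffOn ℝ 1 f (interior C))
    (v : V) (hv : v ∈ interior C) : fderiv ℝ f v v = s * f v := by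
  have hvC : v ∈ C := interior_subset hv
  have hdf : DifferentiableAt ℝ f v :=
    (hfC1.contDiffAt (isOpen_interior.mem_nhds hv)).differentiableAt one_ne_zero
  have h1 : HasDerivAt (fun t : ℝ => f (t • v)) (fderiv ℝ f v v) 1 := by
    have hsm : HasDerivAt (fun t : ℝ => t • v) v 1 := by
      simpa using (hasDerivAt_id (1:ℝ)).smul_const v
    have hdf' : HasFDerivAt f (fderiv ℝ f v) ((1:ℝ) • v) := by
      rw [one_smul]; exact hdf.hasFDerivAt
    exact hdf'.comp_hasDerivAt 1 hsm
  have h2 : HasDerivAt (fun t : ℝ => t ^ s * f v) (s * f v) 1 := by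
    have := (Real.hasDerivAt_rpow_const (x := (1:ℝ)) (p := s) (Or.inl one_ne_zero)).mul_const (f v)
    simpa using this
  have heq : (fun t : ℝ => f (t • v)) =ᶠ[𝓝 (1:ℝ)] fun t => t ^ s * f v := by
    filter_upwards [eventually_gt_nhds (by norm_num : (0:ℝ) < 1)] with t ht
    exact hfhom t ht.le v hvC
  exact h1.unique (h2.congr_of_eventuallyEq heq)

private lemma diff_ineq_aux {V : Type*} [NormedAddCommGroup V] [NormedSpace ℝ V] (C : Set V) (hCcv : Convex ℝ C)
    (hCcone : ∀ v ∈ C, ∀ t : ℝ, 0 ≤ t → t • v ∈ C)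
    (s : ℝ) (hs : 1 < s) (f : V → ℝ)
    (hf0 : ∀ v ∈ C, 0 ≤ f v)
    (hfhom : ∀ t : ℝ, 0 ≤ t → ∀ v ∈ C, f (t • v) = t ^ s * f v)
    (hfpos : ∀ v ∈ interior C, 0 < f v)
    (hfconc : ∀ v ∈ C, ∀ x ∈ C, f v ^ (1/s) + f x ^ (1/s) ≤ f (v + x) ^ (1/s))
    (hfC1 : ContDiffOn ℝ 1 f (interior C))
    (v : V) (hv : v ∈ interior C) (x : V) (hx : x ∈ C) :
    f v ^ ((s-1)/s) * f x ^ (1/s) ≤ fderiv ℝ f v x / s := by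
  have hs0 : s ≠ 0 := by linarith
  have hvC : v ∈ C := interior_subset hv
  have hfv : 0 < f v := hfpos v hv
  have hfx : 0 ≤ f x := hf0 x hx
  have hdf : DifferentiableAt ℝ f v :=
    (hfC1.contDiffAt (isOpen_interior.mem_nhds hv)).differentiableAt one_ne_zero
  -- add_mem in C
  have hadd : ∀ u ∈ C, ∀ w ∈ C, u + w ∈ C := by
    intro u hu w hw
    have h2 : (1/2 : ℝ) • u + (1/2 : ℝ) • w ∈ C :=
      hCcv hu hw (by norm_num) (by norm_num) (by norm_num)
    have := hCcone _ h2 2 (by norm_num)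
    simpa [smul_add, smul_smul] using this
  set φ : ℝ → ℝ := fun ε => f (v + ε • x) with hφ
  set ψ : ℝ → ℝ := fun ε => (f v ^ (1/s) + ε * f x ^ (1/s)) ^ s with hψ
  -- pointwise inequality for ε ≥ 0
  have hle : ∀ ε : ℝ, 0 ≤ ε → ψ ε ≤ φ ε := by
    intro ε hε
    have hεx : ε • x ∈ C := hCcone x hx ε hε
    have hsum : v + ε • x ∈ C := hadd v hvC _ hεx
    have h1 : f v ^ (1/s) + ε * f x ^ (1/s) ≤ f (v + ε • x) ^ (1/s) := by
      have := hfconc v hvC _ hεx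
      have heq : f (ε • x) ^ (1/s) = ε * f x ^ (1/s) := by
        rw [hfhom ε hε x hx, Real.mul_rpow (Real.rpow_nonneg hε s) hfx,
          ← Real.rpow_mul hε, mul_one_div, div_self hs0, Real.rpow_one]
      rw [heq] at this
      exact this
    have hnn : 0 ≤ f v ^ (1/s) + ε * f x ^ (1/s) := by positivity
    calc ψ ε = (f v ^ (1/s) + ε * f x ^ (1/s)) ^ s := rfl
      _ ≤ (f (v + ε • x) ^ (1/s)) ^ s := Real.rpow_le_rpow hnn h1 (by linarith)
      _ = f (v + ε • x) := by
          rw [← Real.rpow_mul (hf0 _ hsum), one_div_mul_cancel hs0, Real.rpow_one]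
  -- derivatives at 0
  have hφ' : HasDerivAt φ (fderiv ℝ f v x) 0 := by
    have hl : HasDerivAt (fun ε : ℝ => v + ε • x) x 0 := by
      simpa using ((hasDerivAt_id (0:ℝ)).smul_const x).const_add v
    have hdf' : HasFDerivAt f (fderiv ℝ f v) (v + (0:ℝ) • x) := by
      rw [zero_smul, add_zero]; exact hdf.hasFDerivAt
    exact hdf'.comp_hasDerivAt 0 hl
  have hψ' : HasDerivAt ψ (s * f v ^ ((s-1)/s) * f x ^ (1/s)) 0 := by
    have hin : HasDerivAt (fun ε : ℝ => f v ^ (1/s) + ε * f x ^ (1/s)) (f x ^ (1/s)) 0 := by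
      simpa using ((hasDerivAt_id (0:ℝ)).mul_const (f x ^ (1/s))).const_add (f v ^ (1/s))
    have hout : HasDerivAt (fun y : ℝ => y ^ s) (s * (f v ^ (1/s)) ^ (s-1))
        (f v ^ (1/s) + 0 * f x ^ (1/s)) := by
      have h0 : f v ^ (1/s) + 0 * f x ^ (1/s) = f v ^ (1/s) := by ring
      rw [h0]
      have := Real.hasDerivAt_rpow_const (x := f v ^ (1/s)) (p := s)
        (Or.inl (by positivity))
      simpa [mul_comm] using this
    have := hout.comp 0 hin
    have hpow : (f v ^ s⁻¹) ^ (s-1) = f v ^ ((s-1)/s) := by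
      rw [← Real.rpow_mul hfv.le]; ring_nf
    simpa [hψ, Function.comp_def, hpow, mul_assoc] using this
  -- compare derivatives via slopes
  have hkey : s * f v ^ ((s-1)/s) * f x ^ (1/s) ≤ fderiv ℝ f v x := by
    have h0 : φ 0 = ψ 0 := by
      show f (v + (0:ℝ) • x) = (f v ^ (1/s) + 0 * f x ^ (1/s)) ^ s
      rw [zero_smul, add_zero, zero_mul, add_zero, ← Real.rpow_mul hfv.le,
        one_div_mul_cancel hs0, Real.rpow_one]
    have hdiff : HasDerivAt (fun ε => φ ε - ψ ε)
        (fderiv ℝ f v x - s * f v ^ ((s-1)/s) * f x ^ (1/s)) 0 := hφ'.sub hψ'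
    have htend : Filter.Tendsto (slope (fun ε => φ ε - ψ ε) 0) (𝓝[>] 0)
        (𝓝 (fderiv ℝ f v x - s * f v ^ ((s-1)/s) * f x ^ (1/s))) :=
      (hasDerivAt_iff_tendsto_slope.mp hdiff).mono_left
        (nhdsWithin_mono 0 (fun y hy => ne_of_gt hy))
    have hnonneg : ∀ ε ∈ Ioi (0:ℝ), 0 ≤ slope (fun ε => φ ε - ψ ε) 0 ε := by
      intro ε hε
      rw [slope_def_field]
      have h1 := hle ε (le_of_lt hε)
      apply div_nonneg _ (by simpa using (le_of_lt hε))
      rw [h0]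
      simp only [mem_Ioi] at hε
      linarith
    have := ge_of_tendsto htend (eventually_nhdsWithin_of_forall hnonneg)
    linarith
  rw [le_div_iff₀ (by linarith : (0:ℝ) < s)]
  calc f v ^ ((s-1)/s) * f x ^ (1/s) * s = s * f v ^ ((s-1)/s) * f x ^ (1/s) := by ring
    _ ≤ fderiv ℝ f v x := hkey

theorem teissier_implies_injective
    (C : Set V) (hCcl : IsClosed C) (hCcv : Convex ℝ C)
    (hCcone : ∀ v ∈ C, ∀ t : ℝ, 0 ≤ t → t • v ∈ C)
    (hCproper : ∀ v ∈ C, -v ∈ C → v = 0)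
    (hCfull : (interior C).Nonempty)
    (s : ℝ) (hs : 1 < s) (f : V → ℝ)
    (hfusc : UpperSemicontinuousOn f C)
    (hf0 : ∀ v ∈ C, 0 ≤ f v)
    (hfhom : ∀ t : ℝ, 0 ≤ t → ∀ v ∈ C, f (t • v) = t ^ s * f v)
    (hfpos : ∀ v ∈ interior C, 0 < f v)
    (hfconc : ∀ v ∈ C, ∀ x ∈ C, f v ^ (1/s) + f x ^ (1/s) ≤ f (v + x) ^ (1/s))
    (hfC1 : ContDiffOn ℝ 1 f (interior C))
    (T : Set V) (hTsub : T ⊆ interior C) (hTne : T.Nonempty)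
    (hTcone : ∀ v ∈ T, ∀ t : ℝ, 0 < t → t • v ∈ T)
    (hteissier : ∀ v ∈ T, ∀ x ∈ T,
      fderiv ℝ f v x / s = f v ^ ((s-1)/s) * f x ^ (1/s) → ∃ t : ℝ, x = t • v) :
    Set.InjOn (fun v => (s⁻¹ • fderiv ℝ f v : V →L[ℝ] ℝ)) T := by
  have hs0 : s ≠ 0 := by linarith
  intro v₁ hv₁ v₂ hv₂ heq
  have hD : fderiv ℝ f v₁ = fderiv ℝ f v₂ :=
    smul_right_injective (V →L[ℝ] ℝ) (inv_ne_zero hs0) heq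
  have hi₁ : v₁ ∈ interior C := hTsub hv₁
  have hi₂ : v₂ ∈ interior C := hTsub hv₂
  have ha : 0 < f v₁ := hfpos v₁ hi₁
  have hb : 0 < f v₂ := hfpos v₂ hi₂
  set a := f v₁
  set b := f v₂
  have hE₁ : fderiv ℝ f v₁ v₁ = s * a := euler_aux C s f hfhom hfC1 v₁ hi₁
  have hE₂ : fderiv ℝ f v₂ v₂ = s * b := euler_aux C s f hfhom hfC1 v₂ hi₂
  have hI₁ : b ^ ((s-1)/s) * a ^ (1/s) ≤ fderiv ℝ f v₂ v₁ / s :=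
    diff_ineq_aux C hCcv hCcone s hs f hf0 hfhom hfpos hfconc hfC1 v₂ hi₂ v₁
      (interior_subset hi₁)
  have hI₂ : a ^ ((s-1)/s) * b ^ (1/s) ≤ fderiv ℝ f v₁ v₂ / s :=
    diff_ineq_aux C hCcv hCcone s hs f hf0 hfhom hfpos hfconc hfC1 v₁ hi₁ v₂
      (interior_subset hi₂)
  have hDa : fderiv ℝ f v₂ v₁ / s = a := by rw [← hD, hE₁]; field_simp
  have hDb : fderiv ℝ f v₁ v₂ / s = b := by rw [hD, hE₂]; field_simp
  rw [hDa] at hI₁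
  rw [hDb] at hI₂
  -- a = b
  have hsplit : ∀ c : ℝ, 0 < c → c ^ ((s-1)/s) * c ^ (1/s) = c := by
    intro c hc
    rw [← Real.rpow_add hc]
    have : (s-1)/s + 1/s = 1 := by field_simp; ring
    rw [this, Real.rpow_one]
  have hexp : 0 < (s-1)/s := div_pos (by linarith) (by linarith)
  have hab : a = b := by
    by_contra hne
    rcases lt_or_gt_of_ne hne with h | h
    · -- a < b
      have h1 : a ^ ((s-1)/s) * a ^ (1/s) < b ^ ((s-1)/s) * a ^ (1/s) :=
        mul_lt_mul_of_pos_right (Real.rpow_lt_rpow ha.le h hexp)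
          (Real.rpow_pos_of_pos ha _)
      rw [hsplit a ha] at h1
      linarith
    · have h1 : a ^ ((s-1)/s) * b ^ (1/s) > b ^ ((s-1)/s) * b ^ (1/s) :=
        mul_lt_mul_of_pos_right (Real.rpow_lt_rpow hb.le h hexp)
          (Real.rpow_pos_of_pos hb _)
      rw [hsplit b hb] at h1
      linarith
  -- equality case, apply Teissier
  have hcond : fderiv ℝ f v₂ v₁ / s = b ^ ((s-1)/s) * a ^ (1/s) := by
    rw [hDa, ← hab, hsplit a ha]
  obtain ⟨t, ht⟩ := hteissier v₂ hv₂ v₁ hv₁ hcond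
  have hf00 : f (0 : V) = 0 := by
    have := hfhom 0 le_rfl v₂ (interior_subset hi₂)
    rw [zero_smul] at this
    rw [this, Real.zero_rpow hs0, zero_mul]
  rcases le_or_gt t 0 with htle | htpos
  · exfalso
    have hneg : -v₁ ∈ C := by
      have : (-t) • v₂ ∈ C := hCcone v₂ (interior_subset hi₂) (-t) (by linarith)
      rw [ht]; rw [← neg_smul]; exact this
    have hz := hCproper v₁ (interior_subset hi₁) hneg
    have hz' : a = 0 := by show f v₁ = 0; rw [hz, hf00]
    linarith
  · have : a = t ^ s * b := by
      rw [show a = f v₁ from rfl, ht, hfhom t htpos.le v₂ (interior_subset hi₂)]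
    rw [← hab] at this
    have hts : t ^ s = 1 := by
      have hz : (t ^ s - 1) * a = 0 := by linarith [this]
      rcases mul_eq_zero.mp hz with h | h
      · linarith
      · linarith
    have ht1 : t = 1 := by
      have hinj := Real.rpow_left_injOn (x := s) hs0
      exact hinj (Set.mem_setOf.mpr htpos.le) (Set.mem_setOf.mpr zero_le_one)
        (by show t ^ s = 1 ^ s; rw [Real.one_rpow, hts])
    rw [ht, ht1, one_smul]
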